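/- Fix ξ ∈ S¹ and define Φ^ξ : ℝ² → ℝ² by Φ^ξ(z) := |z|²ξ if z·ξ > 0 and Φ^ξ(z) := 0 if z·ξ ≤ 0. Then there exists a sequence {Φ_ν} of entropies in C_c^∞(ℝ²; ℝ²) (i.e. z·DΦ_ν(z)z^⊥ = 0 for all z ∈ ℝ², Φ_ν(0) = 0, DΦ_ν(0) = 0) such that: (i) for every R > 0, sup_ν sup_{|z| ≤ R} |Φ_ν(z)| < ∞; and (ii) Φ_ν(z) → Φ^ξ(z) as ν → ∞ for every z ∈ ℝ². -/

import Mathlib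

open MeasureTheory Complex Filter Metric Set
open scoped Topology ENNReal NNReal

noncomputable section

def dotC (a b : ℂ) : ℝ := a.re * b.re + a.im * b.im

def pc1 (f : ℂ → ℝ) (x : ℂ) : ℝ := fderiv ℝ f x 1
def pc2 (f : ℂ → ℝ) (x : ℂ) : ℝ := fderiv ℝ f x Complex.I

def gradC (f : ℂ → ℝ) (x : ℂ) : ℂ := ⟨pc1 f x, pc2 f x⟩

def SigmaA (u : ℂ → ℝ) (x : ℂ) : ℂ :=
  ⟨pc1 u x * (1 - (pc2 u x) ^ 2 - (pc1 u x) ^ 2 / 3),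
   -(pc2 u x) * (1 - (pc1 u x) ^ 2 - (pc2 u x) ^ 2 / 3)⟩

def SigmaB (u : ℂ → ℝ) (x : ℂ) : ℂ :=
  ⟨pc2 u x * (1 - 2 * (pc2 u x) ^ 2 / 3),
   pc1 u x * (1 - 2 * (pc1 u x) ^ 2 / 3)⟩

def IsTestOn (Ω : Set ℂ) (ζ : ℂ → ℝ) : Prop :=
  ContDiff ℝ (⊤ : ℕ∞) ζ ∧ HasCompactSupport ζ ∧ tsupport ζ ⊆ Ω

def MemE (Ω : Set ℂ) (u : ℂ → ℝ) : Prop :=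
  (∃ L : ℝ≥0, LipschitzOnWith L u Ω) ∧
  (∀ᵐ x ∂(volume.restrict Ω), DifferentiableAt ℝ u x ∧ ‖gradC u x‖ = 1) ∧
  (∀ ζ : ℂ → ℝ, IsTestOn Ω ζ → ∫ x in Ω, dotC (SigmaA u x) (gradC ζ x) = 0) ∧
  (∀ ζ : ℂ → ℝ, IsTestOn Ω ζ → ∫ x in Ω, dotC (SigmaB u x) (gradC ζ x) = 0)

def IsBSCDomain (Ω : Set ℂ) : Prop :=
  IsOpen Ω ∧ IsConnected Ω ∧ Bornology.IsBounded Ω ∧ SimplyConnectedSpace Ω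

def Cpt (Ω' Ω : Set ℂ) : Prop := IsCompact (closure Ω') ∧ closure Ω' ⊆ Ω

def wz (v : ℂ → ℂ) (z : ℂ) : ℂ :=
  (2⁻¹ : ℂ) * (fderiv ℝ v z 1 - Complex.I * fderiv ℝ v z Complex.I)
def wzbar (v : ℂ → ℂ) (z : ℂ) : ℂ :=
  (2⁻¹ : ℂ) * (fderiv ℝ v z 1 + Complex.I * fderiv ℝ v z Complex.I)

def BeltramiAE (Ω : Set ℂ) (v : ℂ → ℂ) : Prop :=
  ∀ᵐ z ∂(volume.restrict Ω), DifferentiableAt ℝ v z ∧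
    wzbar v z = (4/3 : ℂ) * (wz v z) ^ 3 ∧ ‖wz v z‖ = 1/2

def mollify (ρ : ℂ → ℝ) (ε : ℝ) (x : ℂ) : ℝ := (ε ^ 2)⁻¹ * ρ (ε⁻¹ • x)

def smoothR (ρ : ℂ → ℝ) (ε : ℝ) (u : ℂ → ℝ) : ℂ → ℝ :=
  MeasureTheory.convolution (mollify ρ ε) u (ContinuousLinearMap.lsmul ℝ ℝ) volume

def smoothC (ρ : ℂ → ℝ) (ε : ℝ) (w : ℂ → ℂ) : ℂ → ℂ :=
  MeasureTheory.convolution (mollify ρ ε) w (ContinuousLinearMap.lsmul ℝ ℝ) volume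

def IsMollifier (ρ : ℂ → ℝ) : Prop :=
  ContDiff ℝ (⊤ : ℕ∞) ρ ∧ (∀ x, 0 ≤ ρ x) ∧ tsupport ρ ⊆ Metric.closedBall 0 1 ∧ (∫ x, ρ x) = 1

def dir : Fin 2 → ℂ := ![1, Complex.I]
def pd (i : Fin 2) (f : ℂ → ℝ) (x : ℂ) : ℝ := fderiv ℝ f x (dir i)
def comp2 (i : Fin 2) (z : ℂ) : ℝ := ![z.re, z.im] i

def wfun (u : ℂ → ℝ) (x : ℂ) : ℂ := Complex.I * gradC u x

def sep (s t : Set ℂ) : ℝ := ⨅ x ∈ s, Metric.infDist x t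


open Classical in
/-- The generalized entropy `Φ^ξ(z) = |z|²ξ` for `z·ξ > 0` and `0` otherwise. -/
noncomputable def PhiXi (ξ : ℂ) (z : ℂ) : ℂ :=
  if 0 < dotC z ξ then (‖z‖ ^ 2 : ℝ) • ξ else 0

/-- `Φ ∈ C_c^∞(ℝ²;ℝ²)` is an entropy: `z·DΦ(z)z^⊥ = 0` for all `z`, `Φ(0) = 0`,
`DΦ(0) = 0`. -/
def IsEntropy (Φ : ℂ → ℂ) : Prop :=
  ContDiff ℝ (⊤ : ℕ∞) Φ ∧ HasCompactSupport Φ ∧ Φ 0 = 0 ∧ fderiv ℝ Φ 0 = 0 ∧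
  ∀ z : ℂ, dotC z (fderiv ℝ Φ z (Complex.I * z)) = 0

namespace Stmt17Aux

/-- smooth step -/
def st : ℝ → ℝ := Real.smoothTransition
/-- β(t) = t·st(t): smooth, 0 for t ≤ 0, = t for t ≥ 1. -/
def bet : ℝ → ℝ := fun t => t * st t
def bet' : ℝ → ℝ := fun t => st t + t * deriv st t
def bet'' : ℝ → ℝ := deriv bet'

lemma st_contDiff : ContDiff ℝ (⊤ : ℕ∞) st := Real.smoothTransition.contDiff

lemma deriv_st_contDiff : ContDiff ℝ (⊤ : ℕ∞) (deriv st) :=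
  (contDiff_infty_iff_deriv.1 st_contDiff).2

lemma bet_contDiff : ContDiff ℝ (⊤ : ℕ∞) bet := contDiff_id.mul st_contDiff

lemma bet'_contDiff : ContDiff ℝ (⊤ : ℕ∞) bet' :=
  st_contDiff.add (contDiff_id.mul deriv_st_contDiff)

lemma hasDeriv_st (t : ℝ) : HasDerivAt st (deriv st t) t :=
  ((st_contDiff.differentiable (by simp)) t).hasDerivAt

lemma hasDeriv_bet (t : ℝ) : HasDerivAt bet (bet' t) t := by
  have := (hasDerivAt_id' t).mul (hasDeriv_st t)
  rw [one_mul] at this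
  exact this

lemma hasDeriv_bet' (t : ℝ) : HasDerivAt bet' (bet'' t) t :=
  ((bet'_contDiff.differentiable (by simp)) t).hasDerivAt

lemma deriv_st_of_neg {t : ℝ} (h : t < 0) : deriv st t = 0 := by
  have he : st =ᶠ[𝓝 t] fun _ => (0:ℝ) := by
    filter_upwards [Iio_mem_nhds h] with s hs
    exact Real.smoothTransition.zero_of_nonpos (le_of_lt hs)
  rw [he.deriv_eq, deriv_const]

lemma deriv_st_of_gt_one {t : ℝ} (h : 1 < t) : deriv st t = 0 := by
  have he : st =ᶠ[𝓝 t] fun _ => (1:ℝ) := by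
    filter_upwards [Ioi_mem_nhds h] with s hs
    exact Real.smoothTransition.one_of_one_le (le_of_lt hs)
  rw [he.deriv_eq, deriv_const]

lemma bet_of_nonpos {t : ℝ} (h : t ≤ 0) : bet t = 0 := by
  show t * st t = 0
  rw [show st t = 0 from Real.smoothTransition.zero_of_nonpos h, mul_zero]

lemma bet_of_one_le {t : ℝ} (h : 1 ≤ t) : bet t = t := by
  simp [bet, st, Real.smoothTransition.one_of_one_le h]

lemma bet'_of_nonpos {t : ℝ} (h : t ≤ 0) : bet' t = 0 := by
  rcases lt_or_eq_of_le h with h' | h'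
  · show st t + t * deriv st t = 0
    rw [show st t = 0 from Real.smoothTransition.zero_of_nonpos h, deriv_st_of_neg h', mul_zero,
      add_zero]
  · subst h'
    show st 0 + 0 * deriv st 0 = 0
    rw [show st 0 = 0 from Real.smoothTransition.zero_of_nonpos le_rfl, zero_mul, add_zero]

lemma bet'_of_one_lt {t : ℝ} (h : 1 < t) : bet' t = 1 := by
  show st t + t * deriv st t = 1
  rw [show st t = 1 from Real.smoothTransition.one_of_one_le h.le, deriv_st_of_gt_one h, mul_zero,
    add_zero]

lemma abs_bet_le (t : ℝ) : |bet t| ≤ |t| := by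
  have h1 := Real.smoothTransition.nonneg t
  have h2 := Real.smoothTransition.le_one t
  rw [show bet t = t * st t from rfl, abs_mul]
  calc |t| * |st t| ≤ |t| * 1 := by
        apply mul_le_mul_of_nonneg_left _ (abs_nonneg t)
        rw [show |st t| = st t from _root_.abs_of_nonneg h1]; exact h2
    _ = |t| := mul_one _

lemma exists_bound_bet' : ∃ M : ℝ, 1 ≤ M ∧ ∀ t, |bet' t| ≤ M := by
  obtain ⟨C, hC⟩ := (isCompact_Icc (a := (0:ℝ)) (b := 1)).exists_bound_of_continuousOn
    ((bet'_contDiff.continuous).continuousOn)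
  refine ⟨max C 1, le_max_right _ _, fun t => ?_⟩
  rcases le_or_gt t 0 with h | h
  · rw [bet'_of_nonpos h]; simpa using (le_max_right C 1)
  rcases le_or_gt t 1 with h1 | h1
  · have := hC t ⟨h.le, h1⟩
    calc |bet' t| ≤ C := by simpa [Real.norm_eq_abs] using this
      _ ≤ max C 1 := le_max_left _ _
  · rw [bet'_of_one_lt h1]; simpa using (le_max_right C 1)

/-- `dotL w` : the continuous linear map `z ↦ dotC z w`. -/
def dotL (w : ℂ) : ℂ →L[ℝ] ℝ := w.re • Complex.reCLM + w.im • Complex.imCLM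

@[simp] lemma dotL_apply (w v : ℂ) : dotL w v = w.re * v.re + w.im * v.im := by
  simp [dotL]

lemma hasFDeriv_dot (w z : ℂ) : HasFDerivAt (fun z => dotC z w) (dotL w) z := by
  have h : (fun z => dotC z w) = fun z => dotL w z := by
    funext v; simp [dotC]; ring
  rw [h]
  exact (dotL w).hasFDerivAt

lemma dotC_contDiff (w : ℂ) : ContDiff ℝ (⊤ : ℕ∞) (fun z => dotC z w) :=
  (Complex.reCLM.contDiff.mul contDiff_const).add (Complex.imCLM.contDiff.mul contDiff_const)

/-- `nf z = ‖z‖²` as an explicit polynomial. -/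
def nf (z : ℂ) : ℝ := z.re * z.re + z.im * z.im

lemma nf_eq (z : ℂ) : nf z = ‖z‖ ^ 2 := by
  rw [Complex.sq_norm, Complex.normSq_apply, nf]

lemma nf_contDiff : ContDiff ℝ (⊤ : ℕ∞) nf :=
  (Complex.reCLM.contDiff.mul Complex.reCLM.contDiff).add
    (Complex.imCLM.contDiff.mul Complex.imCLM.contDiff)

lemma hasFDeriv_nf (z : ℂ) : HasFDerivAt nf ((2:ℝ) • dotL z) z := by
  have h := ((Complex.reCLM.hasFDerivAt (x := z)).mul (Complex.reCLM.hasFDerivAt (x := z))).add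
    ((Complex.imCLM.hasFDerivAt (x := z)).mul (Complex.imCLM.hasFDerivAt (x := z)))
  refine h.congr_fderiv ?_
  ext w
  simp
  ring

/-- multiplication by I as CLM. -/
def cI : ℂ →L[ℝ] ℂ := ContinuousLinearMap.mul ℝ ℂ Complex.I

@[simp] lemma cI_apply (w : ℂ) : cI w = Complex.I * w := rfl

lemma hasFDeriv_cI (z : ℂ) : HasFDerivAt (fun w : ℂ => Complex.I * w) cI z := by
  have : (fun w : ℂ => Complex.I * w) = fun w => cI w := by funext w; simp
  rw [this]
  exact cI.hasFDerivAt

def Nr (ν : ℕ) : ℝ := (ν : ℝ) + 1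

lemma Nr_pos (ν : ℕ) : 0 < Nr ν := by unfold Nr; positivity

def chiν (ν : ℕ) : ℝ → ℝ := fun t => st (Nr ν - t)

lemma chi_le_one (ν : ℕ) (t : ℝ) : |chiν ν t| ≤ 1 := by
  rw [show |chiν ν t| = chiν ν t from _root_.abs_of_nonneg (Real.smoothTransition.nonneg _)]
  exact Real.smoothTransition.le_one _

def chiD (ν : ℕ) (t : ℝ) : ℝ := deriv st (Nr ν - t) * (-1)

lemma hasDeriv_chi (ν : ℕ) (t : ℝ) : HasDerivAt (chiν ν) (chiD ν t) t := by
  have h1 : HasDerivAt (fun t : ℝ => Nr ν - t) (-1) t := by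
    exact (hasDerivAt_id' t).const_sub (Nr ν)
  exact (hasDeriv_st (Nr ν - t)).comp t h1

def fν (ν : ℕ) (ξ z : ℂ) : ℝ := chiν ν (nf z) * bet (Nr ν * dotC z ξ) * (Nr ν)⁻¹

def gν (ν : ℕ) (ξ z : ℂ) : ℝ :=
  chiν ν (nf z) * (dotC z (Complex.I * ξ) * bet' (Nr ν * dotC z ξ))

def Phiν (ν : ℕ) (ξ : ℂ) (z : ℂ) : ℂ := fν ν ξ z • z - gν ν ξ z • (Complex.I * z)

/-- the candidate total derivatives -/
def Lf (ν : ℕ) (ξ z : ℂ) : ℂ →L[ℝ] ℝ :=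
  (Nr ν)⁻¹ • (chiν ν (nf z) • (bet' (Nr ν * dotC z ξ) • (Nr ν • dotL ξ)) +
    bet (Nr ν * dotC z ξ) • (chiD ν (nf z) • ((2:ℝ) • dotL z)))

def Lg (ν : ℕ) (ξ z : ℂ) : ℂ →L[ℝ] ℝ :=
  chiν ν (nf z) • ((dotC z (Complex.I * ξ)) • (bet'' (Nr ν * dotC z ξ) • (Nr ν • dotL ξ)) +
    bet' (Nr ν * dotC z ξ) • dotL (Complex.I * ξ)) +
  (dotC z (Complex.I * ξ) * bet' (Nr ν * dotC z ξ)) • (chiD ν (nf z) • ((2:ℝ) • dotL z))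

def LPhi (ν : ℕ) (ξ z : ℂ) : ℂ →L[ℝ] ℂ :=
  (fν ν ξ z • ContinuousLinearMap.id ℝ ℂ + (Lf ν ξ z).smulRight z) -
  (gν ν ξ z • cI + (Lg ν ξ z).smulRight (Complex.I * z))

lemma hasFDeriv_f (ν : ℕ) (ξ z : ℂ) : HasFDerivAt (fν ν ξ) (Lf ν ξ z) z := by
  have h1 : HasFDerivAt (fun z => chiν ν (nf z)) (chiD ν (nf z) • ((2:ℝ) • dotL z)) z :=
    (hasDeriv_chi ν (nf z)).comp_hasFDerivAt z (hasFDeriv_nf z)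
  have h2 : HasFDerivAt (fun z => Nr ν * dotC z ξ) (Nr ν • dotL ξ) z :=
    (hasFDeriv_dot ξ z).const_mul (Nr ν)
  have h3 : HasFDerivAt (fun z => bet (Nr ν * dotC z ξ))
      (bet' (Nr ν * dotC z ξ) • (Nr ν • dotL ξ)) z :=
    (hasDeriv_bet _).comp_hasFDerivAt z h2
  have h4 := (h1.mul h3).mul_const ((Nr ν)⁻¹)
  exact h4

lemma hasFDeriv_g (ν : ℕ) (ξ z : ℂ) : HasFDerivAt (gν ν ξ) (Lg ν ξ z) z := by
  have h1 : HasFDerivAt (fun z => chiν ν (nf z)) (chiD ν (nf z) • ((2:ℝ) • dotL z)) z :=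
    (hasDeriv_chi ν (nf z)).comp_hasFDerivAt z (hasFDeriv_nf z)
  have h2 : HasFDerivAt (fun z => Nr ν * dotC z ξ) (Nr ν • dotL ξ) z :=
    (hasFDeriv_dot ξ z).const_mul (Nr ν)
  have h4 : HasFDerivAt (fun z => bet' (Nr ν * dotC z ξ))
      (bet'' (Nr ν * dotC z ξ) • (Nr ν • dotL ξ)) z :=
    (hasDeriv_bet' _).comp_hasFDerivAt z h2
  have h5 := (hasFDeriv_dot (Complex.I * ξ) z).mul h4
  have h6 := h1.mul h5
  have : Lg ν ξ z = chiν ν (nf z) • ((dotC z (Complex.I * ξ)) •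
      (bet'' (Nr ν * dotC z ξ) • (Nr ν • dotL ξ)) +
      bet' (Nr ν * dotC z ξ) • dotL (Complex.I * ξ)) +
      (dotC z (Complex.I * ξ) * bet' (Nr ν * dotC z ξ)) • (chiD ν (nf z) • ((2:ℝ) • dotL z)) :=
    rfl
  exact h6

lemma hasFDeriv_Phi (ν : ℕ) (ξ z : ℂ) : HasFDerivAt (Phiν ν ξ) (LPhi ν ξ z) z := by
  have h1 := (hasFDeriv_f ν ξ z).smul (hasFDerivAt_id z)
  have h2 := (hasFDeriv_g ν ξ z).smul (hasFDeriv_cI z)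
  exact h1.sub h2


lemma contDiff_Phi (ν : ℕ) (ξ : ℂ) : ContDiff ℝ (⊤ : ℕ∞) (Phiν ν ξ) := by
  have hchi : ContDiff ℝ (⊤ : ℕ∞) (fun z : ℂ => chiν ν (nf z)) := by
    apply (st_contDiff.comp _).comp nf_contDiff
    exact contDiff_const.sub contDiff_id
  have hbet1 : ContDiff ℝ (⊤ : ℕ∞) (fun z : ℂ => bet (Nr ν * dotC z ξ)) :=
    bet_contDiff.comp (contDiff_const.mul (dotC_contDiff ξ))
  have hbet2 : ContDiff ℝ (⊤ : ℕ∞) (fun z : ℂ => bet' (Nr ν * dotC z ξ)) :=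
    bet'_contDiff.comp (contDiff_const.mul (dotC_contDiff ξ))
  have hf : ContDiff ℝ (⊤ : ℕ∞) (fν ν ξ) := (hchi.mul hbet1).mul contDiff_const
  have hg : ContDiff ℝ (⊤ : ℕ∞) (gν ν ξ) :=
    hchi.mul ((dotC_contDiff (Complex.I * ξ)).mul hbet2)
  exact (hf.smul contDiff_id).sub (hg.smul (contDiff_const.mul contDiff_id))

lemma Phi_zero (ν : ℕ) (ξ : ℂ) : Phiν ν ξ 0 = 0 := by
  simp [Phiν]

lemma fν_zero (ν : ℕ) (ξ : ℂ) : fν ν ξ 0 = 0 := by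
  have : dotC 0 ξ = 0 := by simp [dotC]
  simp [fν, this, bet_of_nonpos le_rfl]

lemma gν_zero (ν : ℕ) (ξ : ℂ) : gν ν ξ 0 = 0 := by
  have : dotC 0 (Complex.I * ξ) = 0 := by simp [dotC]
  simp [gν, this]

lemma fderiv_Phi_zero (ν : ℕ) (ξ : ℂ) : fderiv ℝ (Phiν ν ξ) 0 = 0 := by
  rw [(hasFDeriv_Phi ν ξ 0).fderiv]
  ext w
  simp [LPhi, fν_zero, gν_zero]

lemma entropy_identity (ν : ℕ) (ξ z : ℂ) :
    dotC z (fderiv ℝ (Phiν ν ξ) z (Complex.I * z)) = 0 := by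
  rw [(hasFDeriv_Phi ν ξ z).fderiv]
  simp only [LPhi, Lf, Lg, fν, gν, ContinuousLinearMap.sub_apply, ContinuousLinearMap.add_apply,
    ContinuousLinearMap.coe_smul', Pi.smul_apply, ContinuousLinearMap.smulRight_apply,
    ContinuousLinearMap.coe_id', id_eq, dotL_apply, cI_apply, dotC, smul_eq_mul,
    Complex.add_re, Complex.add_im, Complex.sub_re, Complex.sub_im, Complex.mul_re,
    Complex.mul_im, Complex.I_re, Complex.I_im, Complex.smul_re, Complex.smul_im]
  have hN : Nr ν ≠ 0 := ne_of_gt (Nr_pos ν)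
  field_simp
  ring

lemma key_identity (ξ z : ℂ) :
    (dotC z ξ) • z - (dotC z (Complex.I * ξ)) • (Complex.I * z) = ((‖z‖ : ℝ) ^ 2) • ξ := by
  have hn : (‖z‖ : ℝ) ^ 2 = z.re * z.re + z.im * z.im := by
    rw [Complex.sq_norm, Complex.normSq_apply]
  rw [hn]
  apply Complex.ext <;>
    simp [dotC, Complex.smul_re, Complex.smul_im, Complex.mul_re, Complex.mul_im,
      Complex.sub_re, Complex.sub_im, Complex.I_re, Complex.I_im, Complex.ofReal_re,
      Complex.ofReal_im] <;> ring

lemma Phi_compactSupport (ν : ℕ) (ξ : ℂ) : HasCompactSupport (Phiν ν ξ) := by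
  apply HasCompactSupport.intro (isCompact_closedBall (0:ℂ) (Nr ν))
  intro z hz
  simp only [mem_closedBall, Complex.dist_eq, sub_zero, not_le] at hz
  have h1 : (1:ℝ) ≤ Nr ν := le_add_of_nonneg_left (Nat.cast_nonneg ν)
  have hnf : Nr ν - nf z ≤ 0 := by
    rw [nf_eq z]
    nlinarith [hz, h1]
  have hchi : chiν ν (nf z) = 0 := Real.smoothTransition.zero_of_nonpos hnf
  simp [Phiν, fν, gν, hchi]


lemma abs_dotC_le (z w : ℂ) : |dotC z w| ≤ ‖z‖ * ‖w‖ := by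
  have h : dotC z w = (z * starRingEnd ℂ w).re := by
    simp [dotC, Complex.mul_re, Complex.conj_re, Complex.conj_im]
  rw [h]
  calc |(z * starRingEnd ℂ w).re| ≤ ‖z * starRingEnd ℂ w‖ :=
        Complex.abs_re_le_norm _
    _ = ‖z‖ * ‖w‖ := by rw [norm_mul, Complex.norm_conj]

lemma Phi_bound (ξ : ℂ) (hξ : ‖ξ‖ = 1) {M : ℝ} (hM1 : 1 ≤ M)
    (hMb : ∀ t, |bet' t| ≤ M) (ν : ℕ) (z : ℂ) :
    ‖Phiν ν ξ z‖ ≤ ‖z‖ ^ 2 * (1 + M) := by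
  have hNpos := Nr_pos ν
  have ha : |dotC z ξ| ≤ ‖z‖ := by
    have := abs_dotC_le z ξ
    rwa [hξ, mul_one] at this
  have hb : |dotC z (Complex.I * ξ)| ≤ ‖z‖ := by
    have := abs_dotC_le z (Complex.I * ξ)
    rwa [norm_mul, Complex.norm_I, one_mul, hξ, mul_one] at this
  have hf : |fν ν ξ z| ≤ ‖z‖ := by
    rw [fν, abs_mul, abs_mul]
    have h1 : |bet (Nr ν * dotC z ξ)| ≤ Nr ν * |dotC z ξ| := by
      calc |bet (Nr ν * dotC z ξ)| ≤ |Nr ν * dotC z ξ| := abs_bet_le _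
        _ = Nr ν * |dotC z ξ| := by rw [abs_mul, _root_.abs_of_nonneg hNpos.le]
    have h2 : |(Nr ν)⁻¹| = (Nr ν)⁻¹ := _root_.abs_of_nonneg (by positivity)
    calc |chiν ν (nf z)| * |bet (Nr ν * dotC z ξ)| * |(Nr ν)⁻¹|
        ≤ 1 * (Nr ν * |dotC z ξ|) * (Nr ν)⁻¹ := by
          rw [h2]
          apply mul_le_mul _ le_rfl (by positivity) (by positivity)
          exact mul_le_mul (chi_le_one ν _) h1 (abs_nonneg _) zero_le_one
      _ = |dotC z ξ| * (Nr ν * (Nr ν)⁻¹) := by ring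
      _ = |dotC z ξ| := by rw [mul_inv_cancel₀ (ne_of_gt hNpos), mul_one]
      _ ≤ ‖z‖ := ha
  have hg : |gν ν ξ z| ≤ ‖z‖ * M := by
    rw [gν, abs_mul, abs_mul]
    calc |chiν ν (nf z)| * (|dotC z (Complex.I * ξ)| * |bet' (Nr ν * dotC z ξ)|)
        ≤ 1 * (‖z‖ * M) := by
          apply mul_le_mul (chi_le_one ν _) _ (by positivity) zero_le_one
          exact mul_le_mul hb (hMb _) (abs_nonneg _) (norm_nonneg z)
      _ = ‖z‖ * M := one_mul _
  calc ‖Phiν ν ξ z‖ ≤ ‖fν ν ξ z • z‖ + ‖gν ν ξ z • (Complex.I * z)‖ := norm_sub_le _ _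
    _ = |fν ν ξ z| * ‖z‖ + |gν ν ξ z| * ‖Complex.I * z‖ := by
        rw [norm_smul, norm_smul, Real.norm_eq_abs, Real.norm_eq_abs]
    _ = |fν ν ξ z| * ‖z‖ + |gν ν ξ z| * ‖z‖ := by
        rw [norm_mul, Complex.norm_I, one_mul]
    _ ≤ ‖z‖ * ‖z‖ + ‖z‖ * M * ‖z‖ := by
        apply add_le_add
        · exact mul_le_mul_of_nonneg_right hf (norm_nonneg z)
        · exact mul_le_mul_of_nonneg_right hg (norm_nonneg z)
    _ = ‖z‖ ^ 2 * (1 + M) := by ring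

lemma Phi_tendsto (ξ : ℂ) (z : ℂ) :
    Tendsto (fun ν : ℕ => Phiν ν ξ z) atTop (𝓝 (PhiXi ξ z)) := by
  rcases lt_trichotomy (dotC z ξ) 0 with h | h | h
  · have hz : ∀ ν : ℕ, Phiν ν ξ z = 0 := by
      intro ν
      have hNA : Nr ν * dotC z ξ ≤ 0 := mul_nonpos_of_nonneg_of_nonpos (Nr_pos ν).le h.le
      simp [Phiν, fν, gν, bet_of_nonpos hNA, bet'_of_nonpos hNA]
    have hP : PhiXi ξ z = 0 := by rw [PhiXi, if_neg (not_lt.2 h.le)]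
    rw [hP]
    simpa [hz] using (tendsto_const_nhds : Tendsto (fun _ : ℕ => (0:ℂ)) atTop (𝓝 0))
  · have hz : ∀ ν : ℕ, Phiν ν ξ z = 0 := by
      intro ν
      have hNA : Nr ν * dotC z ξ ≤ 0 := by rw [h, mul_zero]
      simp [Phiν, fν, gν, bet_of_nonpos hNA, bet'_of_nonpos hNA]
    have hP : PhiXi ξ z = 0 := by rw [PhiXi, if_neg (by rw [← h]; exact lt_irrefl _)]
    rw [hP]
    simpa [hz] using (tendsto_const_nhds : Tendsto (fun _ : ℕ => (0:ℂ)) atTop (𝓝 0))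
  · have hP : PhiXi ξ z = ((‖z‖ : ℝ) ^ 2) • ξ := by rw [PhiXi, if_pos h]
    rw [hP]
    have hev : ∀ᶠ ν : ℕ in atTop, Phiν ν ξ z = ((‖z‖ : ℝ) ^ 2) • ξ := by
      have e1 : ∀ᶠ ν : ℕ in atTop, nf z ≤ (ν : ℝ) :=
        tendsto_natCast_atTop_atTop.eventually_ge_atTop (nf z)
      have e2 : ∀ᶠ ν : ℕ in atTop, 1 / dotC z ξ ≤ (ν : ℝ) :=
        tendsto_natCast_atTop_atTop.eventually_ge_atTop (1 / dotC z ξ)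
      filter_upwards [e1, e2] with ν h1 h2
      have hNpos := Nr_pos ν
      have hNgt : 1 < Nr ν * dotC z ξ := by
        have hd : (1 / dotC z ξ) * dotC z ξ = 1 := by field_simp
        have : Nr ν * dotC z ξ = (ν : ℝ) * dotC z ξ + dotC z ξ := by unfold Nr; ring
        nlinarith [mul_le_mul_of_nonneg_right h2 h.le]
      have hchi1 : chiν ν (nf z) = 1 := by
        apply Real.smoothTransition.one_of_one_le
        unfold Nr
        linarith
      have hbet : bet (Nr ν * dotC z ξ) = Nr ν * dotC z ξ := bet_of_one_le hNgt.le
      have hbet' : bet' (Nr ν * dotC z ξ) = 1 := bet'_of_one_lt hNgt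
      have hfv : fν ν ξ z = dotC z ξ := by
        rw [fν, hchi1, hbet, one_mul, mul_comm, inv_mul_cancel_left₀ (ne_of_gt hNpos)]
      have hgv : gν ν ξ z = dotC z (Complex.I * ξ) := by
        rw [gν, hchi1, hbet', one_mul, mul_one]
      rw [Phiν, hfv, hgv, key_identity]
    exact Tendsto.congr' (hev.mono fun ν hν => hν.symm) tendsto_const_nhds

end Stmt17Aux

/-- `Φ^ξ` is a generalized entropy: it is a pointwise limit of a
locally uniformly bounded sequence of entropies. -/
theorem stmt17 (ξ : ℂ) (hξ : ‖ξ‖ = 1) :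
    ∃ Φν : ℕ → ℂ → ℂ,
      (∀ ν : ℕ, IsEntropy (Φν ν)) ∧
      (∀ R : ℝ, 0 < R → ∃ B : ℝ, ∀ ν : ℕ, ∀ z : ℂ, ‖z‖ ≤ R → ‖Φν ν z‖ ≤ B) ∧
      (∀ z : ℂ, Tendsto (fun ν : ℕ => Φν ν z) atTop (𝓝 (PhiXi ξ z))) := by
  refine ⟨fun ν => Stmt17Aux.Phiν ν ξ, ?_, ?_, ?_⟩
  · intro ν
    exact ⟨Stmt17Aux.contDiff_Phi ν ξ, Stmt17Aux.Phi_compactSupport ν ξ,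
      Stmt17Aux.Phi_zero ν ξ, Stmt17Aux.fderiv_Phi_zero ν ξ,
      fun z => Stmt17Aux.entropy_identity ν ξ z⟩
  · intro R hR
    obtain ⟨M, hM1, hMb⟩ := Stmt17Aux.exists_bound_bet'
    refine ⟨R ^ 2 * (1 + M), fun ν z hz => ?_⟩
    calc ‖Stmt17Aux.Phiν ν ξ z‖ ≤ ‖z‖ ^ 2 * (1 + M) :=
          Stmt17Aux.Phi_bound ξ hξ hM1 hMb ν z
      _ ≤ R ^ 2 * (1 + M) := by
          have h2 : ‖z‖ ^ 2 ≤ R ^ 2 := by nlinarith [norm_nonneg z]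
          exact mul_le_mul_of_nonneg_right h2 (by linarith)
  · exact fun z => Stmt17Aux.Phi_tendsto ξ z

end
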